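/- Let p = 2d+1 be odd and define hat-K = sum_{n=0}^{d-1} (-1)^n (d-n) e_{2n} in the Verlinde algebra V_p = Q(zeta_p)[z]/(e_d - e_{d-1}), where indices are reduced using e_{d+i} = e_{d-1-i}. Then the matrix M of multiplication by hat-K in the basis {e_0, e_2, ..., e_{2d-2}} has entries M_{ji} = (-1)^{i+j} (d - max(i,j)). -/

import Mathlib

/-- Chebyshev polynomials of the second kind: `e 0 = 1`, `e 1 = z`,
`e (n+2) = z * e (n+1) - e n`. -/
noncomputable def cheb (K : Type*) [Field K] : ℕ → Polynomial K
  | 0 => 1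
  | 1 => Polynomial.X
  | n + 2 => Polynomial.X * cheb K (n + 1) - cheb K n


open Polynomial Finset

variable {K : Type*} [Field K]

lemma cheb_add_two (n : ℕ) : cheb K (n + 2) = X * cheb K (n + 1) - cheb K n := by
  rw [cheb]

lemma cheb_mul_X (n : ℕ) : X * cheb K (n + 1) = cheb K (n + 2) + cheb K n := by
  rw [cheb_add_two]; ring

lemma cheb_two : (cheb K 2) = X * X - 1 := by
  rw [cheb_add_two]; simp [cheb]

lemma cheb_two_mul (m : ℕ) :
    cheb K 2 * cheb K (m + 2) = cheb K (m + 4) + cheb K (m + 2) + cheb K m := by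
  rw [show m + 4 = (m + 2) + 2 from rfl, cheb_add_two (m+2), cheb_add_two (m+1), cheb_two]
  linear_combination cheb_mul_X (K := K) m

lemma cheb_sq_diff (n : ℕ) :
    cheb K (2 * n + 2) = cheb K (n + 1) ^ 2 - cheb K n ^ 2 := by
  induction n using Nat.twoStepInduction with
  | zero => simp [cheb_two, cheb]; ring
  | one =>
      rw [show 2 * 1 + 2 = 2 + 2 from rfl, cheb_add_two 2, cheb_add_two 1, cheb_two]
      simp [cheb]; ring
  | more n ih1 ih2 =>
      have hrec := cheb_two_mul (K := K) (2 * n + 2)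
      rw [show 2*n+2+4 = 2*(n+2)+2 by ring, show 2*n+2+2 = 2*(n+1)+2 by ring] at hrec
      have h3 := cheb_add_two (K := K) (n + 1)
      have h0 := cheb_add_two (K := K) n
      rw [ih1, ih2, cheb_two] at hrec
      rw [show n+1+2 = n+3 from rfl] at h3
      -- hrec : (X*X-1) * (c(n+2)^2 - c(n+1)^2) = c(2(n+2)+2) + (c(n+2)^2-c(n+1)^2) + (c(n+1)^2 - c n ^2)
      linear_combination -hrec + (cheb K n + X * cheb K (n+1) - cheb K (n+2)) * h0
        - (cheb K (n+3) + X * cheb K (n+2) - cheb K (n+1)) * h3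

lemma claim_gen (d : ℕ) (hd : 2 ≤ d) (c a : ℕ → K) (hcd : c d = 0)
    (h0 : a 0 = c 1)
    (hmid : ∀ j, 1 ≤ j → j < d → a j = c (j - 1) + c j + c (j + 1)) :
    cheb K 2 * ∑ j ∈ range d, C (c j) * cheb K (2 * j)
      = (∑ j ∈ range d, C (a j) * cheb K (2 * j)) + C (c (d - 1)) * cheb K (2 * d) := by
  have hcheb0 : cheb K 0 = 1 := rfl
  set G : ℕ → Polynomial K :=
    fun j => C (c j) * cheb K (2 * j + 2) - C (c (j + 1)) * cheb K (2 * j) with hGdef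
  set H : ℕ → Polynomial K := fun j => if j = 0 then 0 else G (j - 1) with hHdef
  have hH0 : H 0 = 0 := rfl
  have hHsucc : ∀ j, H (j + 1) = G j := fun j => rfl
  have key : ∀ j ∈ range d, cheb K 2 * (C (c j) * cheb K (2 * j))
      = C (a j) * cheb K (2 * j) + (H (j + 1) - H j) := by
    intro j hj
    rw [mem_range] at hj
    match j with
    | 0 =>
      rw [hHsucc, hH0, h0, hGdef]
      simp only [Nat.mul_zero, Nat.zero_add, hcheb0]
      ring
    | (k + 1) =>
      have hm := hmid (k + 1) (by omega) hj
      have ht := cheb_two_mul (K := K) (2 * k)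
      rw [hHsucc, hHsucc, hGdef]
      dsimp only
      simp only [Nat.add_sub_cancel] at hm
      rw [hm, show 2 * (k + 1) = 2 * k + 2 by omega, show 2 * k + 2 + 2 = 2 * k + 4 by omega, map_add, map_add]
      linear_combination C (c (k + 1)) * ht
  rw [Finset.mul_sum, Finset.sum_congr rfl key, Finset.sum_add_distrib,
    Finset.sum_range_sub H d, hH0, sub_zero,
    show d = (d - 1) + 1 by omega, hHsucc, hGdef]
  dsimp only
  rw [show (d-1+1 : ℕ) = d by omega, hcd, map_zero, zero_mul, sub_zero,
    show 2 * (d - 1) + 2 = 2 * d by omega]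

def mcoef (K : Type*) [Field K] (d i j : ℕ) : K :=
  (-1 : K) ^ (i + j) * ((d : K) - (max i j : ℕ))

noncomputable def Svec (K : Type*) [Field K] (d t : ℕ) : Polynomial K :=
  ∑ j ∈ Finset.range d, C (mcoef K d t j) * cheb K (2 * j)

theorem key_thm {K : Type*} [Field K] (d : ℕ) (hd : 1 ≤ d) (i : ℕ) (hi : i < d) :
    Ideal.Quotient.mk (Ideal.span {cheb K d - cheb K (d - 1)})
        ((∑ n ∈ Finset.range d, Polynomial.C ((-1 : K) ^ n * ((d : K) - n)) * cheb K (2 * n))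
          * cheb K (2 * i))
      = Ideal.Quotient.mk (Ideal.span {cheb K d - cheb K (d - 1)})
          (∑ j ∈ Finset.range d,
            Polynomial.C ((-1 : K) ^ (i + j) * ((d : K) - (max i j : ℕ))) * cheb K (2 * j)) := by
  set mk := Ideal.Quotient.mk (Ideal.span {cheb K d - cheb K (d - 1)}) with hmk
  have hKd : mk (cheb K d - cheb K (d - 1)) = 0 := by
    rw [hmk, Ideal.Quotient.eq_zero_iff_mem]
    exact Ideal.subset_span (Set.mem_singleton _)
  have h2d : mk (cheb K (2 * d)) = 0 := by
    have hsq := cheb_sq_diff (K := K) (d - 1)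
    rw [show 2 * (d - 1) + 2 = 2 * d by omega, show d - 1 + 1 = d by omega] at hsq
    have : cheb K (2 * d) = (cheb K d - cheb K (d - 1)) * (cheb K d + cheb K (d - 1)) := by
      rw [hsq]; ring
    rw [this, map_mul, hKd, zero_mul]
  have hhat : (∑ n ∈ Finset.range d, Polynomial.C ((-1 : K) ^ n * ((d : K) - n)) * cheb K (2 * n))
      = Svec K d 0 := by
    rw [Svec]
    refine Finset.sum_congr rfl fun j _ => ?_
    rw [mcoef, Nat.zero_add, Nat.max_eq_right (Nat.zero_le _)]
  have main : ∀ t, t < d → mk (Svec K d 0 * cheb K (2 * t)) = mk (Svec K d t) := by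
    intro t
    induction t using Nat.twoStepInduction with
    | zero =>
      intro _
      rw [show (2 * 0 : ℕ) = 0 by norm_num, show cheb K 0 = 1 from rfl, mul_one]
    | one =>
      intro h1
      have hc := claim_gen (K := K) d (by omega) (mcoef K d 0) (mcoef K d 1)
        (by simp [mcoef, Nat.zero_max])
        (by norm_num [mcoef])
        (by
          intro j hj1 hj2
          obtain ⟨t, rfl⟩ : ∃ t, j = t + 1 := ⟨j - 1, by omega⟩
          simp only [mcoef, Nat.add_sub_cancel]
          rw [show max 1 (t + 1) = t + 1 by omega, show max 0 t = t by omega,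
            show max 0 (t + 1) = t + 1 by omega, show max 0 (t + 1 + 1) = t + 1 + 1 by omega]
          push_cast
          ring)
      have hc' : cheb K 2 * Svec K d 0
          = Svec K d 1 + C (mcoef K d 0 (d - 1)) * cheb K (2 * d) := hc
      rw [show (2 * 1 : ℕ) = 2 by norm_num, mul_comm, hc', map_add, map_mul, h2d, mul_zero,
        add_zero]
    | more n ih1 ih2 =>
      intro h
      have hc := claim_gen (K := K) d (by omega) (mcoef K d (n + 1))
        (fun j => mcoef K d (n + 2) j + mcoef K d (n + 1) j + mcoef K d n j)
        (by
          rw [mcoef, Nat.max_eq_right (by omega : n + 1 ≤ d)]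
          simp)
        (by
          simp only [mcoef]
          rw [show max (n + 2) 0 = n + 2 by omega, show max (n + 1) 0 = n + 1 by omega,
            show max n 0 = n by omega, show max (n + 1) 1 = n + 1 by omega]
          push_cast
          ring)
        (by
          intro j hj1 hj2
          obtain ⟨t, rfl⟩ : ∃ t, j = t + 1 := ⟨j - 1, by omega⟩
          simp only [mcoef, Nat.add_sub_cancel]
          rcases Nat.lt_trichotomy t n with hlt | heq | hgt
          · rw [show max (n + 2) (t + 1) = n + 2 by omega,
              show max (n + 1) (t + 1) = n + 1 by omega,
              show max n (t + 1) = n by omega,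
              show max (n + 1) t = n + 1 by omega,
              show max (n + 1) (t + 1 + 1) = n + 1 by omega]
            push_cast
            ring
          · subst heq
            rw [show max (t + 2) (t + 1) = t + 2 by omega,
              show max (t + 1) (t + 1) = t + 1 by omega,
              show max t (t + 1) = t + 1 by omega,
              show max (t + 1) t = t + 1 by omega,
              show max (t + 1) (t + 1 + 1) = t + 2 by omega]
            push_cast
            ring
          · rw [show max (n + 2) (t + 1) = t + 1 by omega,
              show max (n + 1) (t + 1) = t + 1 by omega,
              show max n (t + 1) = t + 1 by omega,
              show max (n + 1) t = t by omega,
              show max (n + 1) (t + 1 + 1) = t + 1 + 1 by omega]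
            push_cast
            ring)
      have hc' : cheb K 2 * Svec K d (n + 1)
          = (∑ j ∈ Finset.range d,
              C (mcoef K d (n + 2) j + mcoef K d (n + 1) j + mcoef K d n j) * cheb K (2 * j))
            + C (mcoef K d (n + 1) (d - 1)) * cheb K (2 * d) := hc
      have hsplit : (∑ j ∈ Finset.range d,
          C (mcoef K d (n + 2) j + mcoef K d (n + 1) j + mcoef K d n j) * cheb K (2 * j))
          = Svec K d (n + 2) + Svec K d (n + 1) + Svec K d n := by
        simp only [Svec, map_add, add_mul, Finset.sum_add_distrib]
      have hrec : cheb K (2 * (n + 2))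
          = cheb K 2 * cheb K (2 * (n + 1)) - cheb K (2 * (n + 1)) - cheb K (2 * n) := by
        have ht := cheb_two_mul (K := K) (2 * n)
        rw [show 2 * n + 4 = 2 * (n + 2) by omega, show 2 * n + 2 = 2 * (n + 1) by omega] at ht
        linear_combination -ht
      calc mk (Svec K d 0 * cheb K (2 * (n + 2)))
          = mk (cheb K 2 * (Svec K d 0 * cheb K (2 * (n + 1)))
              - Svec K d 0 * cheb K (2 * (n + 1)) - Svec K d 0 * cheb K (2 * n)) := by
            rw [hrec]; ring_nf
        _ = mk (cheb K 2) * mk (Svec K d 0 * cheb K (2 * (n + 1)))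
              - mk (Svec K d 0 * cheb K (2 * (n + 1))) - mk (Svec K d 0 * cheb K (2 * n)) := by
            rw [map_sub, map_sub, map_mul]
        _ = mk (cheb K 2) * mk (Svec K d (n + 1)) - mk (Svec K d (n + 1)) - mk (Svec K d n) := by
            rw [ih2 (by omega), ih1 (by omega)]
        _ = mk (cheb K 2 * Svec K d (n + 1) - Svec K d (n + 1) - Svec K d n) := by
            rw [map_sub, map_sub, map_mul]
        _ = mk (Svec K d (n + 2) + C (mcoef K d (n + 1) (d - 1)) * cheb K (2 * d)) := by
            refine congrArg mk ?_
            rw [hc', hsplit]; ring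
        _ = mk (Svec K d (n + 2)) := by
            rw [map_add, map_mul, h2d, mul_zero, add_zero]
  have hfin := main i hi
  rw [hhat]
  rw [hfin, Svec]
  refine congrArg mk (Finset.sum_congr rfl fun j _ => ?_)
  rw [mcoef]

/-- In the Verlinde algebra `V_p = ℚ(ζ_p)[z]/(e_d - e_{d-1})`, `p = 2d+1`, the matrix of
multiplication by `K̂ = ∑_{n=0}^{d-1} (-1)^n (d-n) e_{2n}` in the basis
`{e_0, e_2, …, e_{2d-2}}` has entries `M_{ji} = (-1)^{i+j}(d - max i j)`, i.e.
`K̂ · e_{2i} = ∑_{j=0}^{d-1} (-1)^{i+j}(d - max i j) e_{2j}`. -/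
theorem hatK_matrix (d : ℕ) (hd : 1 ≤ d) (i : ℕ) (hi : i < d) :
    letI K := CyclotomicField (2 * d + 1) ℚ
    letI mk := Ideal.Quotient.mk (Ideal.span {cheb K d - cheb K (d - 1)})
    mk (∑ n ∈ Finset.range d,
          Polynomial.C ((-1 : K) ^ n * ((d : K) - n)) * cheb K (2 * n))
        * mk (cheb K (2 * i))
      = mk (∑ j ∈ Finset.range d,
          Polynomial.C ((-1 : K) ^ (i + j) * ((d : K) - (max i j : ℕ))) * cheb K (2 * j)) := by
  rw [← map_mul]
  exact key_thm d hd i hi
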